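/- arXiv:2210.14447 — 2 statements merged into one kernel-verified Lean document; each statement's English description precedes it below -/
import Mathlib

section
/- Theorem (two-qubit case): Let ρ be a two-qubit density matrix, γ₁ ∈ [0,1], θ ∈ (0, π/4], s = √(1-γ₁²). Define Φ(ρ) as the composition of the channels ρ ↦ ((2+s)/4)ρ + (1/4)(I⊗σ₁)ρ(I⊗σ₁) + ((1-s)/4)(I⊗σ₃)ρ(I⊗σ₃) and ρ' ↦ (1/2)ρ' + (cos²θ/2)(σ₁⊗I)ρ'(σ₁⊗I) + (sin²θ/2)(σ₃⊗I)ρ'(σ₃⊗I). Then the CHSH value I = Tr[Φ(ρ)((A₀+A₁)⊗B₀)] + Tr[Φ(ρ)((A₀−A₁)⊗B₁)] with A₀ = cosθ σ₁ + sinθ σ₃, A₁ = cosθ σ₁ − sinθ σ₃, B₀ = σ₁, B₁ = γ₁σ₃, satisfies I ≤ 2. -/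
set_option maxHeartbeats 1000000

open Real Matrix
open scoped Kronecker ComplexOrder

noncomputable def σ₁ : Matrix (Fin 2) (Fin 2) ℂ := !![0, 1; 1, 0]
noncomputable def σ₃ : Matrix (Fin 2) (Fin 2) ℂ := !![1, 0; 0, -1]

lemma conj_trace {n : Type*} [Fintype n] (P M X : Matrix n n ℂ) :
    (P * M * P * X).trace = (M * (P * X * P)).trace := by
  calc (P * M * P * X).trace = (P * (M * (P * X))).trace := by rw [Matrix.mul_assoc, Matrix.mul_assoc]
    _ = ((M * (P * X)) * P).trace := Matrix.trace_mul_comm _ _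
    _ = (M * (P * X * P)).trace := by rw [Matrix.mul_assoc]

lemma layer {n : Type*} [Fintype n] (a b c : ℂ) (P Q M X : Matrix n n ℂ) :
    ((a • M + b • (P * M * P) + c • (Q * M * Q)) * X).trace
      = a * (M * X).trace + b * (M * (P * X * P)).trace + c * (M * (Q * X * Q)).trace := by
  simp [Matrix.add_mul, Matrix.smul_mul, conj_trace]

lemma s11 : σ₁ * σ₁ = 1 := by
  ext i j; fin_cases i <;> fin_cases j <;>
    simp [σ₁, Matrix.mul_apply, Fin.sum_univ_two, Matrix.one_apply]
lemma s33 : σ₃ * σ₃ = 1 := by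
  ext i j; fin_cases i <;> fin_cases j <;>
    simp [σ₃, Matrix.mul_apply, Fin.sum_univ_two, Matrix.one_apply]
lemma s313 : σ₃ * σ₁ * σ₃ = -σ₁ := by
  ext i j; fin_cases i <;> fin_cases j <;>
    simp [σ₁, σ₃, Matrix.mul_apply, Fin.sum_univ_two]
lemma s131 : σ₁ * σ₃ * σ₁ = -σ₃ := by
  ext i j; fin_cases i <;> fin_cases j <;>
    simp [σ₁, σ₃, Matrix.mul_apply, Fin.sum_univ_two]

lemma negk {l m n p : Type*} (A : Matrix l m ℂ) (B : Matrix n p ℂ) :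
    (-A) ⊗ₖ B = -(A ⊗ₖ B) := by
  ext i j; simp [Matrix.kroneckerMap_apply]

lemma kneg {l m n p : Type*} (A : Matrix l m ℂ) (B : Matrix n p ℂ) :
    A ⊗ₖ (-B) = -(A ⊗ₖ B) := by
  ext i j; simp [Matrix.kroneckerMap_apply]

lemma c1U : (σ₁ ⊗ₖ (1 : Matrix (Fin 2) (Fin 2) ℂ)) * (σ₁ ⊗ₖ σ₁) * (σ₁ ⊗ₖ 1) = σ₁ ⊗ₖ σ₁ := by
  simp only [← Matrix.mul_kronecker_mul, Matrix.one_mul, Matrix.mul_one, s11, s33, s313, s131, kneg, negk]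
lemma c3U : (σ₃ ⊗ₖ (1 : Matrix (Fin 2) (Fin 2) ℂ)) * (σ₁ ⊗ₖ σ₁) * (σ₃ ⊗ₖ 1) = -(σ₁ ⊗ₖ σ₁) := by
  simp only [← Matrix.mul_kronecker_mul, Matrix.one_mul, Matrix.mul_one, s11, s33, s313, s131, kneg, negk]
lemma c1V : (σ₁ ⊗ₖ (1 : Matrix (Fin 2) (Fin 2) ℂ)) * (σ₃ ⊗ₖ σ₃) * (σ₁ ⊗ₖ 1) = -(σ₃ ⊗ₖ σ₃) := by
  simp only [← Matrix.mul_kronecker_mul, Matrix.one_mul, Matrix.mul_one, s11, s33, s313, s131, kneg, negk]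
lemma c3V : (σ₃ ⊗ₖ (1 : Matrix (Fin 2) (Fin 2) ℂ)) * (σ₃ ⊗ₖ σ₃) * (σ₃ ⊗ₖ 1) = σ₃ ⊗ₖ σ₃ := by
  simp only [← Matrix.mul_kronecker_mul, Matrix.one_mul, Matrix.mul_one, s11, s33, s313, s131, kneg, negk]
lemma d1U : ((1 : Matrix (Fin 2) (Fin 2) ℂ) ⊗ₖ σ₁) * (σ₁ ⊗ₖ σ₁) * (1 ⊗ₖ σ₁) = σ₁ ⊗ₖ σ₁ := by
  simp only [← Matrix.mul_kronecker_mul, Matrix.one_mul, Matrix.mul_one, s11, s33, s313, s131, kneg, negk]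
lemma d3U : ((1 : Matrix (Fin 2) (Fin 2) ℂ) ⊗ₖ σ₃) * (σ₁ ⊗ₖ σ₁) * (1 ⊗ₖ σ₃) = -(σ₁ ⊗ₖ σ₁) := by
  simp only [← Matrix.mul_kronecker_mul, Matrix.one_mul, Matrix.mul_one, s11, s33, s313, s131, kneg, negk]
lemma d1V : ((1 : Matrix (Fin 2) (Fin 2) ℂ) ⊗ₖ σ₁) * (σ₃ ⊗ₖ σ₃) * (1 ⊗ₖ σ₁) = -(σ₃ ⊗ₖ σ₃) := by
  simp only [← Matrix.mul_kronecker_mul, Matrix.one_mul, Matrix.mul_one, s11, s33, s313, s131, kneg, negk]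
lemma d3V : ((1 : Matrix (Fin 2) (Fin 2) ℂ) ⊗ₖ σ₃) * (σ₃ ⊗ₖ σ₃) * (1 ⊗ₖ σ₃) = σ₃ ⊗ₖ σ₃ := by
  simp only [← Matrix.mul_kronecker_mul, Matrix.one_mul, Matrix.mul_one, s11, s33, s313, s131, kneg, negk]

lemma trace_re_nonneg' {n : Type*} [Fintype n] [DecidableEq n] {M : Matrix n n ℂ}
    (h : M.PosSemidef) : 0 ≤ M.trace.re := by
  have hd : ∀ i, 0 ≤ (M i i).re := by
    intro i
    have := h.dotProduct_mulVec_nonneg (Pi.single i 1)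
    have he : star (Pi.single i 1 : n → ℂ) ⬝ᵥ (M *ᵥ Pi.single i 1) = M i i := by
      simp [dotProduct, Matrix.mulVec, Pi.single_apply, apply_ite,
        Finset.sum_ite_eq, Finset.mul_sum]
    rw [he] at this
    exact (Complex.le_def.mp this).1
  simpa [Matrix.trace, Matrix.diag, Complex.re_sum] using
    Finset.sum_nonneg fun i _ => hd i

lemma trace_mul_re_nonneg {n : Type*} [Fintype n] [DecidableEq n] {ρ B : Matrix n n ℂ}
    (hρ : ρ.PosSemidef) (hB : B.PosSemidef) : 0 ≤ ((ρ * B).trace).re := by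
  obtain ⟨C, rfl⟩ : ∃ C : Matrix n n ℂ, ρ = star C * C := by
    open scoped MatrixOrder Matrix.Norms.L2Operator in
    exact CStarAlgebra.nonneg_iff_eq_star_mul_self.mp hρ.nonneg
  simp only [Matrix.star_eq_conjTranspose]
  have h : (Cᴴ * C * B).trace = (C * B * Cᴴ).trace := by
    rw [Matrix.trace_mul_cycle]; exact Matrix.trace_mul_cycle B Cᴴ C
  rw [h]
  exact trace_re_nonneg' (hB.mul_mul_conjTranspose_same C)

lemma hUpsd : ((1 : Matrix (Fin 2 × Fin 2) (Fin 2 × Fin 2) ℂ) - σ₁ ⊗ₖ σ₁).PosSemidef := by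
  refine Matrix.PosSemidef.of_dotProduct_mulVec_nonneg ?_ ?_
  · rw [Matrix.IsHermitian]
    ext ⟨i, j⟩ ⟨k, l⟩
    fin_cases i <;> fin_cases j <;> fin_cases k <;> fin_cases l <;>
      simp [σ₁, Matrix.conjTranspose_apply, Matrix.one_apply, Prod.ext_iff]
  · intro x
    have he : star x ⬝ᵥ (((1 : Matrix (Fin 2 × Fin 2) (Fin 2 × Fin 2) ℂ) - σ₁ ⊗ₖ σ₁) *ᵥ x)
        = star (x (0,0) - x (1,1)) * (x (0,0) - x (1,1))
          + star (x (0,1) - x (1,0)) * (x (0,1) - x (1,0)) := by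
      simp [dotProduct, Matrix.mulVec, Fintype.sum_prod_type, Fin.sum_univ_two,
        Matrix.sub_apply, Matrix.one_apply, σ₁, Matrix.kroneckerMap_apply, Prod.ext_iff]
      ring
    rw [he]
    exact add_nonneg (star_mul_self_nonneg _) (star_mul_self_nonneg _)

lemma hVpsd : ((1 : Matrix (Fin 2 × Fin 2) (Fin 2 × Fin 2) ℂ) - σ₃ ⊗ₖ σ₃).PosSemidef := by
  refine Matrix.PosSemidef.of_dotProduct_mulVec_nonneg ?_ ?_
  · rw [Matrix.IsHermitian]
    ext ⟨i, j⟩ ⟨k, l⟩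
    fin_cases i <;> fin_cases j <;> fin_cases k <;> fin_cases l <;>
      simp [σ₃, Matrix.conjTranspose_apply, Matrix.one_apply, Prod.ext_iff]
  · intro x
    have he : star x ⬝ᵥ (((1 : Matrix (Fin 2 × Fin 2) (Fin 2 × Fin 2) ℂ) - σ₃ ⊗ₖ σ₃) *ᵥ x)
        = star (x (0,1)) * (x (0,1)) + star (x (0,1)) * (x (0,1))
          + (star (x (1,0)) * (x (1,0)) + star (x (1,0)) * (x (1,0))) := by
      simp [dotProduct, Matrix.mulVec, Fintype.sum_prod_type, Fin.sum_univ_two,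
        Matrix.sub_apply, Matrix.one_apply, σ₃, Matrix.kroneckerMap_apply, Prod.ext_iff]
      ring
    rw [he]
    exact add_nonneg (add_nonneg (star_mul_self_nonneg _) (star_mul_self_nonneg _))
      (add_nonneg (star_mul_self_nonneg _) (star_mul_self_nonneg _))

theorem stmt_9 (ρ : Matrix (Fin 2 × Fin 2) (Fin 2 × Fin 2) ℂ)
    (hρ : ρ.PosSemidef) (htr : ρ.trace = 1)
    (γ₁ θ : ℝ) (hγ1 : 0 ≤ γ₁) (hγ2 : γ₁ ≤ 1) (hθ1 : 0 < θ) (hθ2 : θ ≤ π / 4) :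
    let s : ℝ := Real.sqrt (1 - γ₁ ^ 2)
    let ρ' : Matrix (Fin 2 × Fin 2) (Fin 2 × Fin 2) ℂ :=
      (((2 + s) / 4 : ℝ) : ℂ) • ρ
        + ((1 / 4 : ℝ) : ℂ) • ((1 ⊗ₖ σ₁) * ρ * (1 ⊗ₖ σ₁))
        + (((1 - s) / 4 : ℝ) : ℂ) • ((1 ⊗ₖ σ₃) * ρ * (1 ⊗ₖ σ₃))
    let Φρ : Matrix (Fin 2 × Fin 2) (Fin 2 × Fin 2) ℂ :=
      ((1 / 2 : ℝ) : ℂ) • ρ'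
        + ((cos θ ^ 2 / 2 : ℝ) : ℂ) • ((σ₁ ⊗ₖ 1) * ρ' * (σ₁ ⊗ₖ 1))
        + ((sin θ ^ 2 / 2 : ℝ) : ℂ) • ((σ₃ ⊗ₖ 1) * ρ' * (σ₃ ⊗ₖ 1))
    let A₀ : Matrix (Fin 2) (Fin 2) ℂ := ((cos θ : ℝ) : ℂ) • σ₁ + ((sin θ : ℝ) : ℂ) • σ₃
    let A₁ : Matrix (Fin 2) (Fin 2) ℂ := ((cos θ : ℝ) : ℂ) • σ₁ - ((sin θ : ℝ) : ℂ) • σ₃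
    let B₀ : Matrix (Fin 2) (Fin 2) ℂ := σ₁
    let B₁ : Matrix (Fin 2) (Fin 2) ℂ := ((γ₁ : ℝ) : ℂ) • σ₃
    ((Φρ * ((A₀ + A₁) ⊗ₖ B₀)).trace + (Φρ * ((A₀ - A₁) ⊗ₖ B₁)).trace).re ≤ 2 := by
  intro s ρ' Φρ A₀ A₁ B₀ B₁
  set c : ℝ := cos θ with hc
  set t : ℝ := sin θ with ht
  have key : (Φρ * ((A₀ + A₁) ⊗ₖ B₀)).trace + (Φρ * ((A₀ - A₁) ⊗ₖ B₁)).trace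
      = ((c ^ 3 * (1 + s) : ℝ) : ℂ) * (ρ * (σ₁ ⊗ₖ σ₁)).trace
        + ((γ₁ * (t * (1 - c ^ 2)) : ℝ) : ℂ) * (ρ * (σ₃ ⊗ₖ σ₃)).trace := by
    have hA : (A₀ + A₁) ⊗ₖ B₀ = ((2 * c : ℝ) : ℂ) • (σ₁ ⊗ₖ σ₁) := by
      simp only [A₀, A₁, B₀]
      rw [show ((c : ℝ) : ℂ) • σ₁ + ((t : ℝ) : ℂ) • σ₃ + (((c : ℝ) : ℂ) • σ₁ - ((t : ℝ) : ℂ) • σ₃)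
        = ((2 * c : ℝ) : ℂ) • σ₁ by push_cast; module, Matrix.smul_kronecker]
    have hB : (A₀ - A₁) ⊗ₖ B₁ = ((2 * t * γ₁ : ℝ) : ℂ) • (σ₃ ⊗ₖ σ₃) := by
      simp only [A₀, A₁, B₁]
      rw [show ((c : ℝ) : ℂ) • σ₁ + ((t : ℝ) : ℂ) • σ₃ - (((c : ℝ) : ℂ) • σ₁ - ((t : ℝ) : ℂ) • σ₃)
        = ((2 * t : ℝ) : ℂ) • σ₃ by push_cast; module, Matrix.smul_kronecker,
        Matrix.kronecker_smul, smul_smul]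
      push_cast
      ring_nf
    rw [hA, hB, Matrix.mul_smul, Matrix.trace_smul, Matrix.mul_smul, Matrix.trace_smul]
    simp only [Φρ]
    rw [Real.sin_sq θ, ← hc]
    simp only [layer, c1U, c3U, c1V, c3V, Matrix.mul_neg, Matrix.trace_neg, smul_eq_mul]
    simp only [ρ']
    simp only [layer, d1U, d3U, d1V, d3V, Matrix.mul_neg, Matrix.trace_neg, smul_eq_mul]
    push_cast
    ring
  rw [key]
  have hx : ((ρ * (σ₁ ⊗ₖ σ₁)).trace).re ≤ 1 := by
    have h0 := trace_mul_re_nonneg hρ hUpsd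
    have hexp : (ρ * (1 - σ₁ ⊗ₖ σ₁)).trace = 1 - (ρ * (σ₁ ⊗ₖ σ₁)).trace := by
      rw [Matrix.mul_sub, Matrix.mul_one, Matrix.trace_sub, htr]
    rw [hexp] at h0
    simpa using h0
  have hy : ((ρ * (σ₃ ⊗ₖ σ₃)).trace).re ≤ 1 := by
    have h0 := trace_mul_re_nonneg hρ hVpsd
    have hexp : (ρ * (1 - σ₃ ⊗ₖ σ₃)).trace = 1 - (ρ * (σ₃ ⊗ₖ σ₃)).trace := by
      rw [Matrix.mul_sub, Matrix.mul_one, Matrix.trace_sub, htr]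
    rw [hexp] at h0
    simpa using h0
  have hcpos : 0 ≤ c := Real.cos_nonneg_of_mem_Icc ⟨by linarith [Real.pi_pos], by linarith [Real.pi_pos]⟩
  have htpos : 0 ≤ t := Real.sin_nonneg_of_nonneg_of_le_pi (le_of_lt hθ1)
    (by linarith [Real.pi_pos])
  have hct : c ^ 2 + t ^ 2 = 1 := by rw [hc, ht]; rw [add_comm]; exact Real.sin_sq_add_cos_sq θ
  have hs0 : 0 ≤ s := Real.sqrt_nonneg _
  have hs2 : s ^ 2 = 1 - γ₁ ^ 2 := Real.sq_sqrt (by nlinarith)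
  have hre : (((c ^ 3 * (1 + s) : ℝ) : ℂ) * (ρ * (σ₁ ⊗ₖ σ₁)).trace
      + ((γ₁ * (t * (1 - c ^ 2)) : ℝ) : ℂ) * (ρ * (σ₃ ⊗ₖ σ₃)).trace).re
      = (c ^ 3 * (1 + s)) * ((ρ * (σ₁ ⊗ₖ σ₁)).trace).re
        + (γ₁ * (t * (1 - c ^ 2))) * ((ρ * (σ₃ ⊗ₖ σ₃)).trace).re := by
    simp only [Complex.add_re, Complex.re_ofReal_mul]
  rw [hre]
  have h1 : 0 ≤ c ^ 3 * (1 + s) := by positivity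
  have h2 : 0 ≤ γ₁ * (t * (1 - c ^ 2)) := by
    have h12 : 1 - c ^ 2 = t ^ 2 := by linarith
    rw [h12]; positivity
  have hb : (c ^ 3 * (1 + s)) * ((ρ * (σ₁ ⊗ₖ σ₁)).trace).re
      + (γ₁ * (t * (1 - c ^ 2))) * ((ρ * (σ₃ ⊗ₖ σ₃)).trace).re
      ≤ c ^ 3 * (1 + s) + γ₁ * (t * (1 - c ^ 2)) := by
    have := mul_le_of_le_one_right h1 hx
    have := mul_le_of_le_one_right h2 hy
    linarith
  refine hb.trans ?_
  -- final scalar inequality: c³(1+s) + γ₁ t³ ≤ 2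
  have ht2 : 1 - c ^ 2 = t ^ 2 := by linarith
  rw [ht2]
  have hs1 : s ≤ 1 := by nlinarith [sq_nonneg γ₁]
  have h6 : c ^ 6 + t ^ 6 ≤ 1 := by nlinarith [sq_nonneg (c * t), sq_nonneg (c ^ 2 + t ^ 2)]
  have hK0 : 0 ≤ c ^ 3 * (1 + s) + γ₁ * (t * t ^ 2) := by positivity
  have cauchy : (c ^ 3 * (1 + s) + γ₁ * (t * t ^ 2)) ^ 2 ≤ (2 + 2 * s) * (c ^ 6 + t ^ 6) := by
    nlinarith [sq_nonneg ((1 + s) * t ^ 3 - γ₁ * c ^ 3)]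
  nlinarith [cauchy, h6, hK0, hs1, hs0]
end

section
/- For θ ∈ (0, π/4] and s ∈ [0,1], the expression cos³(θ)(1+s) + √(1-s²)·sin³(θ) attains values at most 2, with equality only in the limit θ → 0 with s = 1. -/
open Real

theorem stmt_16 (θ s : ℝ) (hθ1 : 0 < θ) (hθ2 : θ ≤ π / 4) (hs1 : 0 ≤ s) (hs2 : s ≤ 1) :
    cos θ ^ 3 * (1 + s) + Real.sqrt (1 - s ^ 2) * sin θ ^ 3 < 2 ∧
    Filter.Tendsto (fun t : ℝ => cos t ^ 3 * (1 + 1) + Real.sqrt (1 - 1 ^ 2) * sin t ^ 3)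
      (nhdsWithin 0 (Set.Ioi 0)) (nhds 2) := by
  have hpi := Real.pi_pos
  constructor
  · set c := cos θ with hc
    set i := sin θ with hi
    have hpy : i ^ 2 + c ^ 2 = 1 := sin_sq_add_cos_sq θ
    have hc1 : c < 1 := by
      have h := Real.cos_lt_cos_of_nonneg_of_le_pi le_rfl (by linarith) hθ1
      simpa using h
    have hc0 : 0 ≤ c := Real.cos_nonneg_of_mem_Icc ⟨by linarith, by linarith⟩
    have hi0 : 0 ≤ i := Real.sin_nonneg_of_nonneg_of_le_pi (le_of_lt hθ1) (by linarith)
    have hu0 : 0 ≤ Real.sqrt (1 - s ^ 2) := Real.sqrt_nonneg _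
    have hu2 : Real.sqrt (1 - s ^ 2) ^ 2 = 1 - s ^ 2 :=
      Real.sq_sqrt (by nlinarith)
    set u := Real.sqrt (1 - s ^ 2) with hu
    have h6 : c ^ 6 + i ^ 6 = 1 - 3 * (c * i) ^ 2 := by
      linear_combination ((i ^ 2 + c ^ 2) ^ 2 + (i ^ 2 + c ^ 2) + 1 - 3 * c ^ 2 * i ^ 2) * hpy
    have hX2 : (c ^ 3 * s + u * i ^ 3) ^ 2 ≤ c ^ 6 + i ^ 6 := by
      nlinarith [sq_nonneg (c ^ 3 * u - i ^ 3 * s)]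
    have hXnn : 0 ≤ c ^ 3 * s + u * i ^ 3 := by positivity
    have hX1 : c ^ 3 * s + u * i ^ 3 ≤ 1 := by
      nlinarith [sq_nonneg (c * i)]
    have hc3 : c ^ 3 < 1 := by nlinarith
    nlinarith
  · have h : Filter.Tendsto (fun t : ℝ => cos t ^ 3 * (1 + 1) + Real.sqrt (1 - 1 ^ 2) * sin t ^ 3)
        (nhds 0) (nhds 2) := by
      have hcont : Continuous (fun t : ℝ => cos t ^ 3 * (1 + 1) + Real.sqrt (1 - 1 ^ 2) * sin t ^ 3) := by
        continuity
      have h0 := hcont.tendsto 0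
      norm_num at h0
      convert h0 using 2 <;> norm_num
    exact h.mono_left nhdsWithin_le_nhds
end
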